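/- Let H be a Hilbert space, let A ⊆ H × H be maximal monotone, and let B : H → H be Lipschitz continuous. If the relation A + B := {(x, y + Bx) : (x,y) ∈ A} is monotone, then A + B is maximal monotone. -/

import Mathlib

open MeasureTheory

noncomputable section

/-- The exponentially weighted Lebesgue measure `e^{-2ρt}·dt` on `ℝ`. -/
def wMeasure (ρ : ℝ) : Measure ℝ :=
  MeasureTheory.volume.withDensity fun t => ENNReal.ofReal (Real.exp (-2 * ρ * t))

/-- The weighted space `L_{2,ρ}(ℝ;H)`. -/
abbrev L2w (H : Type*) [NormedAddCommGroup H] (ρ : ℝ) : Type _ :=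
  Lp H 2 (wMeasure ρ)

/-- The set of classes of smooth compactly supported functions (`C_c^∞(ℝ;H)`)
inside `L_{2,ρ}(ℝ;H)`. -/
def testSet (H : Type*) [NormedAddCommGroup H] [InnerProductSpace ℂ H] (ρ : ℝ) :
    Set (L2w H ρ) :=
  {u | ∃ φ : ℝ → H, ContDiff ℝ (⊤ : ℕ∞) φ ∧ HasCompactSupport φ ∧
    ∀ᵐ t ∂(wMeasure ρ), u t = φ t}

/-- The graph of `∂_{t,ρ}`, i.e. the closure (in `L_{2,ρ} × L_{2,ρ}`) of the graph of the
derivative operator defined on smooth compactly supported functions. -/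
def derivGraph (H : Type*) [NormedAddCommGroup H] [InnerProductSpace ℂ H] (ρ : ℝ) :
    Set (L2w H ρ × L2w H ρ) :=
  closure {p | ∃ φ : ℝ → H, ContDiff ℝ (⊤ : ℕ∞) φ ∧ HasCompactSupport φ ∧
    (∀ᵐ t ∂(wMeasure ρ), p.1 t = φ t) ∧ (∀ᵐ t ∂(wMeasure ρ), p.2 t = deriv φ t)}

section Rel

variable {K : Type*} [NormedAddCommGroup K] [InnerProductSpace ℂ K]

/-- A relation `A ⊆ K × K` is monotone if `Re⟨u - x, v - y⟩ ≥ 0` for all `(u,v), (x,y) ∈ A`. -/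
def IsMonotoneRel (A : Set (K × K)) : Prop :=
  ∀ p ∈ A, ∀ q ∈ A, 0 ≤ (inner ℂ (p.1 - q.1) (p.2 - q.2) : ℂ).re

/-- A relation is maximal monotone if it is monotone and has no proper monotone extension. -/
def IsMaxMonotoneRel (A : Set (K × K)) : Prop :=
  IsMonotoneRel A ∧ ∀ B : Set (K × K), IsMonotoneRel B → A ⊆ B → A = B

/-- `A - c = {(u, v - c•u) ; (u,v) ∈ A}`. -/
def shiftRel (c : ℝ) (A : Set (K × K)) : Set (K × K) :=
  (fun p : K × K => (p.1, p.2 - (c : ℂ) • p.1)) '' A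

/-- `A` is `c`-monotone if `A - c` is monotone. -/
def IsCMonotoneRel (c : ℝ) (A : Set (K × K)) : Prop :=
  IsMonotoneRel (shiftRel c A)

/-- `A` is `c`-maximal monotone if `A - c` is maximal monotone. -/
def IsCMaxMonotoneRel (c : ℝ) (A : Set (K × K)) : Prop :=
  IsMaxMonotoneRel (shiftRel c A)

end Rel

/-- Translation invariance of a relation on `L_{2,ρ}(ℝ;H)`:
`(u,v) ∈ A` implies `(τ_h u, τ_h v) ∈ A` for `h ≥ 0`. -/
def TransInvRel (H : Type*) [NormedAddCommGroup H] [InnerProductSpace ℂ H] (ρ : ℝ)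
    (A : Set (L2w H ρ × L2w H ρ)) : Prop :=
  ∀ u v, (u, v) ∈ A → ∀ h : ℝ, 0 ≤ h → ∀ u' v' : L2w H ρ,
    (∀ᵐ t ∂(wMeasure ρ), u' t = u (t + h)) →
    (∀ᵐ t ∂(wMeasure ρ), v' t = v (t + h)) → (u', v') ∈ A


section AuxiliaryLemmas

section Aux

attribute [local instance] InnerProductSpace.complexToReal

variable {K : Type*} [NormedAddCommGroup K] [InnerProductSpace ℂ K]

lemma rinner_eq (x y : K) : (inner ℝ x y : ℝ) = (inner ℂ x y : ℂ).re := rfl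

lemma rinner_smul (lam : ℝ) (x y : K) : (inner ℝ x ((lam:ℂ) • y) : ℝ) = lam * (inner ℝ x y : ℝ) := by
  show ((inner ℂ x ((lam:ℂ) • y) : ℂ)).re = _
  rw [inner_smul_right]
  exact Complex.re_ofReal_mul lam _

lemma combo_norm (u v : K) (t : ℝ) :
    ‖(1-t)•u + t•v‖^2 = (1-t)*‖u‖^2 + t*‖v‖^2 - t*(1-t)*‖u-v‖^2 := by
  have h1 := norm_add_sq_real ((1-t)•u) (t•v)
  have h2 := norm_sub_sq_real u v
  have e1 : ‖(1-t)•u‖^2 = (1-t)^2*‖u‖^2 := by rw [norm_smul]; simp [mul_pow, sq_abs]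
  have e2 : ‖t•v‖^2 = t^2*‖v‖^2 := by rw [norm_smul]; simp [mul_pow, sq_abs]
  rw [e1, e2, real_inner_smul_left, real_inner_smul_right] at h1
  linear_combination h1 + t*(1-t)*h2

lemma monR {A : Set (K × K)} (hA : IsMonotoneRel A) {p q : K × K} (hp : p ∈ A) (hq : q ∈ A) :
    0 ≤ (inner ℝ (p.1 - q.1) (p.2 - q.2) : ℝ) := by
  rw [rinner_eq]; exact hA p hp q hq

lemma mem_of_forall_rel {A : Set (K × K)} (hA : IsMaxMonotoneRel A) (p : K × K)
    (h : ∀ a ∈ A, 0 ≤ (inner ℝ (p.1 - a.1) (p.2 - a.2) : ℝ)) : p ∈ A := by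
  have hB : IsMonotoneRel (insert p A) := by
    intro q hq r hr
    rw [Set.mem_insert_iff] at hq hr
    rcases hq with hq | hq
    · subst hq
      rcases hr with hr | hr
      · subst hr; simp
      · have := h r hr; rwa [rinner_eq] at this
    · rcases hr with hr | hr
      · subst hr
        have := h q hq
        rw [rinner_eq] at this
        rwa [show q.1 - r.1 = -(r.1 - q.1) by abel, show q.2 - r.2 = -(r.2 - q.2) by abel,
          inner_neg_neg]
      · exact hA.1 q hq r hr
  have := hA.2 _ hB (Set.subset_insert _ _)
  rw [this]; exact Set.mem_insert _ _

lemma maxMono_nonempty {A : Set (K × K)} (hA : IsMaxMonotoneRel A) : A.Nonempty := by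
  by_contra h
  rw [Set.not_nonempty_iff_eq_empty] at h
  have hmono : IsMonotoneRel ({((0:K),(0:K))} : Set (K × K)) := by
    rintro q hq r hr
    simp only [Set.mem_singleton_iff] at hq hr
    subst hq; subst hr; simp
  have := hA.2 _ hmono (by simp [h])
  rw [h] at this
  exact absurd this.symm (by simp)

lemma image_mono {A : Set (K × K)} (c : ℝ) (hc : 0 < c) (w : K) (h : IsMonotoneRel A) :
    IsMonotoneRel ((fun p : K × K => (p.1, (c:ℂ) • p.2 + w)) '' A) := by
  rintro _ ⟨p, hp, rfl⟩ _ ⟨q, hq, rfl⟩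
  have h0 := h p hp q hq
  simp only
  rw [show ((c:ℂ)•p.2 + w) - ((c:ℂ)•q.2 + w) = (c:ℂ)•(p.2 - q.2) by
    rw [smul_sub]; abel, inner_smul_right, Complex.re_ofReal_mul]
  exact mul_nonneg hc.le h0

lemma image_max {A : Set (K × K)} (c : ℝ) (hc : 0 < c) (w : K) (h : IsMaxMonotoneRel A) :
    IsMaxMonotoneRel ((fun p : K × K => (p.1, (c:ℂ) • p.2 + w)) '' A) := by
  set f := fun p : K × K => (p.1, (c:ℂ) • p.2 + w) with hf
  set g := fun p : K × K => (p.1, ((c⁻¹:ℝ):ℂ) • p.2 + (-(((c⁻¹:ℝ):ℂ) • w))) with hg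
  have hc0 : (c:ℂ) ≠ 0 := by exact_mod_cast hc.ne'
  have h1 : ((c⁻¹:ℝ):ℂ) * (c:ℂ) = 1 := by
    push_cast; field_simp
  have h2 : (c:ℂ) * ((c⁻¹:ℝ):ℂ) = 1 := by
    push_cast; field_simp
  have hgf : ∀ p : K × K, g (f p) = p := by
    intro p
    simp only [hf, hg]
    ext
    · rfl
    · show ((c⁻¹:ℝ):ℂ) • ((c:ℂ) • p.2 + w) + -(((c⁻¹:ℝ):ℂ) • w) = p.2
      rw [smul_add, smul_smul, h1, one_smul]; abel
  have hfg : ∀ p : K × K, f (g p) = p := by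
    intro p
    simp only [hf, hg]
    ext
    · rfl
    · show (c:ℂ) • (((c⁻¹:ℝ):ℂ) • p.2 + -(((c⁻¹:ℝ):ℂ) • w)) + w = p.2
      rw [smul_add, smul_smul, h2, one_smul, smul_neg, smul_smul, h2, one_smul]; abel
  refine ⟨image_mono c hc w h.1, ?_⟩
  intro B hB hsub
  have hB' : IsMonotoneRel ((fun p : K × K => (p.1, ((c⁻¹:ℝ):ℂ) • p.2 + (-(((c⁻¹:ℝ):ℂ) • w)))) '' B) := by
    have := image_mono (c⁻¹) (by positivity) (-(((c⁻¹:ℝ):ℂ) • w)) hB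
    exact this
  have hsubA : A ⊆ g '' B := fun a ha => ⟨f a, hsub ⟨a, ha, rfl⟩, hgf a⟩
  have hAeq : A = g '' B := h.2 _ hB' hsubA
  refine subset_antisymm hsub fun b hb => ?_
  have : g b ∈ A := hAeq ▸ ⟨b, hb, rfl⟩
  exact ⟨g b, this, hfg b⟩

end Aux

section Minty

attribute [local instance] InnerProductSpace.complexToReal

variable {K : Type*} [NormedAddCommGroup K] [InnerProductSpace ℂ K]

/-- The auxiliary functional in the Fitzpatrick-type proof of Minty's theorem. -/
noncomputable def gvF (p a : K × K) : ℝ :=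
  ‖p.1 + a.2‖^2/2 + ‖p.2 + a.1‖^2/2 - ‖a.1 + a.2‖^2/2

lemma gvF_eq (p a : K × K) :
    gvF p a = ‖p.1 + p.2‖^2/2 - (inner ℝ (p.1 - a.1) (p.2 - a.2) : ℝ) := by
  unfold gvF
  rw [norm_add_sq_real, norm_add_sq_real, norm_add_sq_real, norm_add_sq_real,
    inner_sub_left, inner_sub_right, inner_sub_right]
  rw [real_inner_comm a.1 p.2]
  ring

lemma gvF_combo (p q a : K × K) (t : ℝ) :
    gvF ((1-t)•p.1 + t•q.1, (1-t)•p.2 + t•q.2) a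
      = (1-t) * gvF p a + t * gvF q a - t*(1-t)/2 * (‖p.1 - q.1‖^2 + ‖p.2 - q.2‖^2) := by
  unfold gvF
  have e1 : (1-t)•p.1 + t•q.1 + a.2 = (1-t)•(p.1 + a.2) + t•(q.1 + a.2) := by
    module
  have e2 : (1-t)•p.2 + t•q.2 + a.1 = (1-t)•(p.2 + a.1) + t•(q.2 + a.1) := by
    module
  simp only [e1, e2]
  rw [combo_norm, combo_norm]
  rw [show p.1 + a.2 - (q.1 + a.2) = p.1 - q.1 by abel,
    show p.2 + a.1 - (q.2 + a.1) = p.2 - q.2 by abel]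
  ring

lemma gvF_cont (a : K × K) : Continuous fun p : K × K => gvF p a := by
  unfold gvF
  fun_prop

lemma minty0 [CompleteSpace K] {A : Set (K × K)} (hA : IsMaxMonotoneRel A) :
    ∃ a ∈ A, a.1 + a.2 = 0 := by
  obtain ⟨a₀, ha₀⟩ := maxMono_nonempty hA
  set S : Set ℝ := {r : ℝ | ∃ p : K × K, ∀ a ∈ A, gvF p a ≤ r} with hS
  have hSne : S.Nonempty := by
    refine ⟨‖a₀.1 + a₀.2‖^2/2, a₀, fun a ha => ?_⟩
    rw [gvF_eq]
    have := monR hA.1 ha₀ ha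
    linarith
  have hS0 : ∀ r ∈ S, (0:ℝ) ≤ r := by
    rintro r ⟨p, hp⟩
    by_contra hr
    push_neg at hr
    have hpA : p ∈ A := by
      refine mem_of_forall_rel hA p fun a ha => ?_
      have h1 := hp a ha
      rw [gvF_eq] at h1
      nlinarith [sq_nonneg ‖p.1 + p.2‖]
    have h2 := hp p hpA
    rw [gvF_eq] at h2
    simp only [sub_self, inner_zero_left] at h2
    nlinarith [sq_nonneg ‖p.1 + p.2‖]
  have hbdd : BddBelow S := ⟨0, hS0⟩
  set μ := sInf S with hμ
  have hμ0 : 0 ≤ μ := le_csInf hSne hS0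
  have hnear : ∀ (p : K × K) (δ : ℝ), 0 < δ → ∃ a ∈ A, μ - δ < gvF p a := by
    intro p δ hδ
    by_contra hcon
    push_neg at hcon
    have : μ - δ ∈ S := ⟨p, hcon⟩
    have := csInf_le hbdd this
    linarith
  have hseq : ∀ n : ℕ, ∃ p : K × K, ∀ a ∈ A, gvF p a ≤ μ + 1/(n+1) := by
    intro n
    obtain ⟨r, hrS, hrlt⟩ := Real.lt_sInf_add_pos hSne (by positivity : (0:ℝ) < 1/(n+1))
    obtain ⟨p, hp⟩ := hrS
    exact ⟨p, fun a ha => (hp a ha).trans hrlt.le⟩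
  choose p hp using hseq
  have hcau : ∀ (q r : K × K) (ε₁ ε₂ : ℝ), (∀ a ∈ A, gvF q a ≤ μ + ε₁) →
      (∀ a ∈ A, gvF r a ≤ μ + ε₂) →
      ‖q.1 - r.1‖^2 + ‖q.2 - r.2‖^2 ≤ 4*(ε₁+ε₂) := by
    intro q r ε₁ ε₂ h1 h2
    have key : ∀ δ : ℝ, 0 < δ → ‖q.1 - r.1‖^2 + ‖q.2 - r.2‖^2 ≤ 4*(ε₁+ε₂) + 8*δ := by
      intro δ hδ
      obtain ⟨a, ha, hga⟩ := hnear
        ((1-(1/2:ℝ))•q.1 + (1/2:ℝ)•r.1, (1-(1/2:ℝ))•q.2 + (1/2:ℝ)•r.2) δ hδ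
      have hg := gvF_combo q r a (1/2)
      have hq1 := h1 a ha
      have hr1 := h2 a ha
      rw [hg] at hga
      nlinarith
    by_contra hcon
    push_neg at hcon
    have := key ((‖q.1 - r.1‖^2 + ‖q.2 - r.2‖^2 - 4*(ε₁+ε₂))/16) (by linarith)
    linarith
  -- the minimizing sequence is Cauchy
  have hb0 : Filter.Tendsto (fun N : ℕ => Real.sqrt (8/(N+1))) Filter.atTop (nhds 0) := by
    have h1 : Filter.Tendsto (fun N : ℕ => 8/((N:ℝ)+1)) Filter.atTop (nhds 0) := by
      have := tendsto_one_div_add_atTop_nhds_zero_nat.const_mul (8:ℝ)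
      simpa [div_eq_mul_inv, mul_comm] using this
    have h2 := (Real.continuous_sqrt.tendsto 0).comp h1
    simp only [Function.comp_def, Real.sqrt_zero] at h2
    exact h2
  have hdistb : ∀ (N n m : ℕ), N ≤ n → N ≤ m →
      dist ((p n).1) ((p m).1) ≤ Real.sqrt (8/((N:ℝ)+1)) ∧
      dist ((p n).2) ((p m).2) ≤ Real.sqrt (8/((N:ℝ)+1)) := by
    intro N n m hn hm
    have h1 := hcau (p n) (p m) (1/(n+1)) (1/(m+1)) (hp n) (hp m)
    have h2 : (1:ℝ)/(n+1) ≤ 1/(N+1) := by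
      apply one_div_le_one_div_of_le (by positivity)
      exact_mod_cast Nat.succ_le_succ hn
    have h3 : (1:ℝ)/(m+1) ≤ 1/(N+1) := by
      apply one_div_le_one_div_of_le (by positivity)
      exact_mod_cast Nat.succ_le_succ hm
    have h4 : ‖(p n).1 - (p m).1‖^2 + ‖(p n).2 - (p m).2‖^2 ≤ 8/((N:ℝ)+1) := by
      calc ‖(p n).1 - (p m).1‖^2 + ‖(p n).2 - (p m).2‖^2 ≤ 4*(1/(n+1) + 1/(m+1)) := h1
        _ ≤ 8/((N:ℝ)+1) := by
            rw [show (8:ℝ)/((N:ℝ)+1) = 4*(1/((N:ℝ)+1) + 1/((N:ℝ)+1)) by ring]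
            linarith
    have h5 : (0:ℝ) ≤ 8/((N:ℝ)+1) := by positivity
    constructor
    · rw [dist_eq_norm]
      nlinarith [Real.sq_sqrt h5, Real.sqrt_nonneg (8/((N:ℝ)+1)),
        norm_nonneg ((p n).1 - (p m).1), norm_nonneg ((p n).2 - (p m).2),
        sq_nonneg ‖(p n).2 - (p m).2‖]
    · rw [dist_eq_norm]
      nlinarith [Real.sq_sqrt h5, Real.sqrt_nonneg (8/((N:ℝ)+1)),
        norm_nonneg ((p n).1 - (p m).1), norm_nonneg ((p n).2 - (p m).2),
        sq_nonneg ‖(p n).1 - (p m).1‖]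
  have hcu : CauchySeq (fun n => (p n).1) :=
    cauchySeq_of_le_tendsto_0 _ (fun n m N hn hm => (hdistb N n m hn hm).1) hb0
  have hcv : CauchySeq (fun n => (p n).2) :=
    cauchySeq_of_le_tendsto_0 _ (fun n m N hn hm => (hdistb N n m hn hm).2) hb0
  obtain ⟨xb, hxb⟩ := cauchySeq_tendsto_of_complete hcu
  obtain ⟨yb, hyb⟩ := cauchySeq_tendsto_of_complete hcv
  -- the limit satisfies gvF (xb, yb) a ≤ μ for all a ∈ A
  have hlim : ∀ a ∈ A, gvF (xb, yb) a ≤ μ := by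
    intro a ha
    have ht1 : Filter.Tendsto (fun n => gvF ((p n).1, (p n).2) a) Filter.atTop
        (nhds (gvF (xb, yb) a)) :=
      ((gvF_cont a).tendsto _).comp (hxb.prodMk_nhds hyb)
    have ht2 : Filter.Tendsto (fun n : ℕ => μ + 1/((n:ℝ)+1)) Filter.atTop (nhds μ) := by
      have := tendsto_one_div_add_atTop_nhds_zero_nat.const_add μ
      simpa using this
    exact le_of_tendsto_of_tendsto' ht1 ht2 fun n => hp n a ha
  -- variational inequality
  have hvar : ∀ b ∈ A, μ + (‖xb - b.1‖^2 + ‖yb - b.2‖^2)/2 ≤ ‖b.1 + b.2‖^2/2 := by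
    intro b hb
    set R := ‖xb - b.1‖^2 + ‖yb - b.2‖^2 with hRdef
    have hR0 : 0 ≤ R := by positivity
    have step : ∀ t : ℝ, 0 < t → t < 1 → μ ≤ ‖b.1 + b.2‖^2/2 - (1-t)/2*R := by
      intro t ht0 ht1
      have step2 : ∀ δ : ℝ, 0 < δ → t*μ ≤ t*(‖b.1 + b.2‖^2/2) - t*(1-t)/2*R + δ := by
        intro δ hδ
        obtain ⟨a, ha, hga⟩ := hnear ((1-t)•xb + t•b.1, (1-t)•yb + t•b.2) δ hδ
        have hcomb := gvF_combo (xb, yb) b a t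
        simp only at hcomb
        rw [hcomb] at hga
        have h1 := hlim a ha
        have h2 : gvF b a ≤ ‖b.1 + b.2‖^2/2 := by
          rw [gvF_eq]
          have := monR hA.1 hb ha
          linarith
        nlinarith
      have h3 : t*μ ≤ t*(‖b.1 + b.2‖^2/2 - (1-t)/2*R) := by
        by_contra hcon
        push_neg at hcon
        have := step2 ((t*μ - t*(‖b.1 + b.2‖^2/2 - (1-t)/2*R))/2) (by linarith)
        nlinarith
      exact le_of_mul_le_mul_left h3 ht0
    rcases eq_or_lt_of_le hR0 with hRz | hRpos
    · have := step (1/2) (by norm_num) (by norm_num)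
      rw [← hRz] at this ⊢
      linarith
    · refine le_of_forall_pos_le_add fun ε hε => ?_
      set t := min (1/2 : ℝ) (ε/R) with htdef
      have ht0 : 0 < t := lt_min (by norm_num) (by positivity)
      have ht1 : t < 1 := lt_of_le_of_lt (min_le_left _ _) (by norm_num)
      have := step t ht0 ht1
      have htR : t*R ≤ ε := by
        calc t*R ≤ (ε/R)*R := by
              apply mul_le_mul_of_nonneg_right (min_le_right _ _) hR0
          _ = ε := by field_simp
      nlinarith
  -- conclude
  have hstar : ∀ b ∈ A, μ + ‖xb‖^2/2 + ‖yb‖^2/2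
      ≤ (inner ℝ xb b.1 : ℝ) + (inner ℝ yb b.2 : ℝ) + (inner ℝ b.1 b.2 : ℝ) := by
    intro b hb
    have h1 := hvar b hb
    have e1 := norm_sub_sq_real xb b.1
    have e2 := norm_sub_sq_real yb b.2
    have e3 := norm_add_sq_real b.1 b.2
    nlinarith [sq_nonneg ‖b.1‖, sq_nonneg ‖b.2‖]
  have hmemrel : ∀ b ∈ A, 0 ≤ (inner ℝ (-yb - b.1) (-xb - b.2) : ℝ) := by
    intro b hb
    rw [show -yb - b.1 = -(yb + b.1) by abel, show -xb - b.2 = -(xb + b.2) by abel,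
      inner_neg_neg, inner_add_left, inner_add_right, inner_add_right]
    have h1 := hstar b hb
    have e1 := norm_add_sq_real xb yb
    have h2 : (inner ℝ yb xb : ℝ) = (inner ℝ xb yb : ℝ) := real_inner_comm _ _
    have h3 : (inner ℝ b.1 xb : ℝ) = (inner ℝ xb b.1 : ℝ) := real_inner_comm _ _
    nlinarith [sq_nonneg ‖xb + yb‖]
  have hmem : ((-yb, -xb) : K × K) ∈ A := by
    refine mem_of_forall_rel hA _ fun a ha => ?_
    simpa using hmemrel a ha
  have hfin := hstar _ hmem
  simp only [inner_neg_right, inner_neg_left, inner_neg_neg] at hfin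
  have e1 := norm_add_sq_real xb yb
  have h2 : (inner ℝ yb xb : ℝ) = (inner ℝ xb yb : ℝ) := real_inner_comm _ _
  have hsum : ‖xb + yb‖^2 ≤ 0 := by nlinarith
  have hzero : xb + yb = 0 := by
    have := norm_nonneg (xb + yb)
    have h3 : ‖xb + yb‖ = 0 := by nlinarith
    rwa [norm_eq_zero] at h3
  refine ⟨(-yb, -xb), hmem, ?_⟩
  simp only
  rw [show -yb + -xb = -(xb + yb) by abel, hzero, neg_zero]

end Minty

section Main

attribute [local instance] InnerProductSpace.complexToReal

variable {K : Type*} [NormedAddCommGroup K] [InnerProductSpace ℂ K]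

lemma minty_lam [CompleteSpace K] {A : Set (K × K)} (hA : IsMaxMonotoneRel A)
    (lam : ℝ) (hlam : 0 < lam) (z : K) :
    ∃ a ∈ A, a.1 + (lam:ℂ) • a.2 = z := by
  obtain ⟨a', ha', hsum⟩ := minty0 (image_max lam hlam (-z) hA)
  obtain ⟨a, ha, rfl⟩ := ha'
  refine ⟨a, ha, ?_⟩
  have : a.1 + ((lam:ℂ) • a.2 + -z) = 0 := hsum
  have h2 : a.1 + (lam:ℂ) • a.2 - z = 0 := by rw [← this]; abel
  exact sub_eq_zero.mp h2

lemma res_lip {A : Set (K × K)} (hA : IsMonotoneRel A) (lam : ℝ) (hlam : 0 < lam)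
    {a b : K × K} (ha : a ∈ A) (hb : b ∈ A) :
    ‖a.1 - b.1‖ ≤ ‖(a.1 + (lam:ℂ) • a.2) - (b.1 + (lam:ℂ) • b.2)‖ := by
  have h0 := monR hA ha hb
  have expand : (a.1 + (lam:ℂ) • a.2) - (b.1 + (lam:ℂ) • b.2)
      = (a.1 - b.1) + (lam:ℂ) • (a.2 - b.2) := by
    rw [smul_sub]; abel
  have key : ‖a.1 - b.1‖^2
      ≤ (inner ℝ (a.1 - b.1) ((a.1 + (lam:ℂ) • a.2) - (b.1 + (lam:ℂ) • b.2)) : ℝ) := by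
    rw [expand, inner_add_right, rinner_smul, real_inner_self_eq_norm_sq]
    nlinarith [mul_nonneg hlam.le h0]
  have hcs := real_inner_le_norm (a.1 - b.1) ((a.1 + (lam:ℂ) • a.2) - (b.1 + (lam:ℂ) • b.2))
  rcases eq_or_lt_of_le (norm_nonneg (a.1 - b.1)) with hz | hz
  · rw [← hz]; exact norm_nonneg _
  · nlinarith

end Main

end AuxiliaryLemmas

attribute [local instance] InnerProductSpace.complexToReal

/-- If `A ⊆ H × H` is maximal monotone, `B : H → H` is Lipschitz continuous
and the relation `A + B = {(x, y + Bx) ; (x,y) ∈ A}` is monotone, then `A + B` is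
maximal monotone. -/
theorem maxMonotone_add_lipschitz
    {K : Type*} [NormedAddCommGroup K] [InnerProductSpace ℂ K] [CompleteSpace K]
    (A : Set (K × K)) (B : K → K)
    (hA : IsMaxMonotoneRel A)
    (hB : ∃ L : NNReal, LipschitzWith L B)
    (hmono : IsMonotoneRel ((fun p : K × K => (p.1, p.2 + B p.1)) '' A)) :
    IsMaxMonotoneRel ((fun p : K × K => (p.1, p.2 + B p.1)) '' A) := by
  classical
  obtain ⟨L, hL⟩ := hB
  set C := ((fun p : K × K => (p.1, p.2 + B p.1)) '' A) with hC
  refine ⟨hmono, fun D hD hCD => ?_⟩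
  refine subset_antisymm hCD fun q hq => ?_
  obtain ⟨x, w⟩ := q
  set lam : ℝ := (2*((L:ℝ)+1))⁻¹ with hlamdef
  have hlam0 : 0 < lam := by positivity
  have hlamL : lam * L < 1 := by
    rw [hlamdef, inv_mul_eq_div, div_lt_one (by positivity)]
    have := L.coe_nonneg
    linarith
  have hAne : A.Nonempty := maxMono_nonempty hA
  have hKne : Nonempty K := ⟨hAne.choose.1⟩
  have hsolve : ∀ y : K, ∃ a ∈ A,
      a.1 + (lam:ℂ) • a.2 = x + (lam:ℂ) • w - (lam:ℂ) • (B y) :=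
    fun y => minty_lam hA lam hlam0 _
  choose F hFA hFeq using hsolve
  set Φ : K → K := fun y => (F y).1 with hΦ
  have hκnn : (0:ℝ) ≤ lam * L := by positivity
  have hΦlip : LipschitzWith ⟨lam * L, hκnn⟩ Φ := by
    apply LipschitzWith.of_dist_le_mul
    intro y y'
    have h1 := res_lip hA.1 lam hlam0 (hFA y) (hFA y')
    rw [hFeq y, hFeq y'] at h1
    have h2 : (x + (lam:ℂ) • w - (lam:ℂ) • (B y)) - (x + (lam:ℂ) • w - (lam:ℂ) • (B y'))
        = (lam:ℂ) • (B y' - B y) := by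
      rw [smul_sub]; abel
    rw [h2] at h1
    have h3 : ‖(lam:ℂ) • (B y' - B y)‖ = lam * ‖B y' - B y‖ := by
      rw [norm_smul]
      simp [Complex.norm_real, abs_of_pos hlam0]
    have h4 : ‖B y' - B y‖ ≤ (L:ℝ) * ‖y' - y‖ := by
      have := hL.dist_le_mul y' y
      simpa [dist_eq_norm] using this
    have h5 : dist (Φ y) (Φ y') = ‖(F y).1 - (F y').1‖ := dist_eq_norm _ _
    have h6 : dist y y' = ‖y' - y‖ := by rw [dist_eq_norm, norm_sub_rev]
    rw [h5, h6]
    calc ‖(F y).1 - (F y').1‖ ≤ lam * ‖B y' - B y‖ := by rw [← h3]; exact h1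
      _ ≤ lam * ((L:ℝ) * ‖y' - y‖) := by
          exact mul_le_mul_of_nonneg_left h4 hlam0.le
      _ = (lam * L) * ‖y' - y‖ := by ring
  have hcontr : ContractingWith ⟨lam * L, hκnn⟩ Φ := by
    constructor
    · exact_mod_cast hlamL
    · exact hΦlip
  set y₀ := hcontr.fixedPoint Φ with hy₀
  have hfix : Φ y₀ = y₀ := hcontr.fixedPoint_isFixedPt
  set a := F y₀ with hadef
  have haA : a ∈ A := hFA y₀
  have ha1 : a.1 = y₀ := hfix
  have haeq : a.1 + (lam:ℂ) • a.2 = x + (lam:ℂ) • w - (lam:ℂ) • (B a.1) := by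
    have := hFeq y₀
    rw [← hadef] at this
    rw [this, ha1]
  have hkey : (lam:ℂ) • (w - (a.2 + B a.1)) = a.1 - x := by
    rw [smul_sub, smul_add]
    rw [eq_sub_iff_add_eq] at haeq
    have : (lam:ℂ) • a.2 + (lam:ℂ) • B a.1 = x + (lam:ℂ) • w - a.1 := by
      rw [eq_sub_iff_add_eq]
      calc (lam:ℂ) • a.2 + (lam:ℂ) • B a.1 + a.1
          = a.1 + (lam:ℂ) • a.2 + (lam:ℂ) • B a.1 := by abel
        _ = x + (lam:ℂ) • w := haeq
    rw [this]; abel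
  have haC : (a.1, a.2 + B a.1) ∈ C := ⟨a, haA, rfl⟩
  have h0 : 0 ≤ (inner ℝ (x - a.1) (w - (a.2 + B a.1)) : ℝ) := by
    have := hD (x, w) hq (a.1, a.2 + B a.1) (hCD haC)
    rw [rinner_eq]
    exact this
  have h1 : (inner ℝ (x - a.1) ((lam:ℂ) • (w - (a.2 + B a.1))) : ℝ)
      = lam * (inner ℝ (x - a.1) (w - (a.2 + B a.1)) : ℝ) := rinner_smul _ _ _
  have h2 : (inner ℝ (x - a.1) (a.1 - x) : ℝ) = -(‖x - a.1‖^2) := by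
    rw [show a.1 - x = -(x - a.1) by abel, inner_neg_right, real_inner_self_eq_norm_sq]
  have hx : x = a.1 := by
    have h3 : lam * (inner ℝ (x - a.1) (w - (a.2 + B a.1)) : ℝ) = -(‖x - a.1‖^2) := by
      rw [← h1, hkey, h2]
    have h4 : 0 ≤ lam * (inner ℝ (x - a.1) (w - (a.2 + B a.1)) : ℝ) :=
      mul_nonneg hlam0.le h0
    have h5 : ‖x - a.1‖^2 ≤ 0 := by linarith [h3 ▸ h4]
    have h6 : ‖x - a.1‖ = 0 := by nlinarith [norm_nonneg (x - a.1)]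
    rw [norm_eq_zero, sub_eq_zero] at h6
    exact h6
  have hw : w = a.2 + B a.1 := by
    have h7 : (lam:ℂ) • (w - (a.2 + B a.1)) = 0 := by
      rw [hkey, ← hx, sub_self]
    have hlamne : (lam:ℂ) ≠ 0 := by exact_mod_cast hlam0.ne'
    rcases smul_eq_zero.mp h7 with h | h
    · exact absurd h hlamne
    · rwa [sub_eq_zero] at h
  rw [hx, hw]
  exact haC
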